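/- Let n be a positive integer. Every positive integer m ≤ n can be written as m = u·v with positive integers u, v such that one of the following holds: (i) u is a prime and u > n^{2/3}; or (ii) u ≤ n^{2/3}, v ≤ n^{2/3}, and 2Ω(u) − 2 ≤ Ω(v). -/

import Mathlib

set_option maxHeartbeats 1000000 in
/-- Factorization lemma: every positive `m ≤ n` can be written as `m = u * v` where
either `u` is a prime exceeding `n^{2/3}`, or `u, v ≤ n^{2/3}` and `2Ω(u) - 2 ≤ Ω(v)`,
where `Ω` counts prime factors with multiplicity. -/
theorem factorization_lemma (n : ℕ) (hn : 0 < n) (m : ℕ) (hm : 0 < m) (hmn : m ≤ n) :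
    ∃ u v : ℕ, 0 < u ∧ 0 < v ∧ m = u * v ∧
      ((Nat.Prime u ∧ (n : ℝ) ^ ((2 : ℝ) / 3) < (u : ℝ)) ∨
        ((u : ℝ) ≤ (n : ℝ) ^ ((2 : ℝ) / 3) ∧ (v : ℝ) ≤ (n : ℝ) ^ ((2 : ℝ) / 3) ∧
          2 * u.primeFactorsList.length ≤ v.primeFactorsList.length + 2)) := by
  classical
  set R : ℝ := (n : ℝ) ^ ((1 : ℝ)/3) with hRdef
  have hn1 : (1:ℝ) ≤ (n:ℝ) := by exact_mod_cast hn
  have hR1 : 1 ≤ R := Real.one_le_rpow hn1 (by norm_num)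
  have hT : (n:ℝ) ^ ((2:ℝ)/3) = R ^ 2 := by
    rw [hRdef, ← Real.rpow_natCast ((n:ℝ) ^ ((1:ℝ)/3)) 2, ← Real.rpow_mul (Nat.cast_nonneg n)]
    norm_num
  have hN : (n:ℝ) = R ^ 3 := by
    nth_rw 1 [hRdef]
    rw [← Real.rpow_natCast ((n:ℝ) ^ ((1:ℝ)/3)) 3, ← Real.rpow_mul (Nat.cast_nonneg n)]
    norm_num
  rw [hT]
  by_cases hbig : ∃ p : ℕ, p.Prime ∧ p ∣ m ∧ R ^ 2 < (p:ℝ)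
  · obtain ⟨p, hp, hpd, hplt⟩ := hbig
    exact ⟨p, m / p, hp.pos, Nat.div_pos (Nat.le_of_dvd hm hpd) hp.pos,
      (Nat.mul_div_cancel' hpd).symm, Or.inl ⟨hp, hplt⟩⟩
  push_neg at hbig
  set L : List ℕ := m.primeFactorsList.reverse with hLdef
  have hLprod : L.prod = m := by
    rw [hLdef, List.prod_reverse, Nat.prod_primeFactorsList hm.ne']
  have hLmem : ∀ p ∈ L, p.Prime := by
    intro p hp
    exact Nat.prime_of_mem_primeFactorsList (List.mem_reverse.mp hp)
  have hLsorted : L.Pairwise (· ≥ ·) := by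
    rw [hLdef, List.pairwise_reverse]
    exact (Nat.primeFactorsList_sorted m).pairwise
  set k := L.length with hkdef
  set P : ℕ → Prop := fun j => (m:ℝ) ≤ R ^ 2 * ((L.take j).prod : ℕ) with hPdef
  have hPk : P k := by
    rw [hPdef]
    rw [hkdef]
    simp only [List.take_length, hLprod]
    have h1 : (1:ℝ) ≤ R ^ 2 := one_le_pow₀ hR1
    nlinarith [(Nat.cast_nonneg (α := ℝ) m)]
  have hex : ∃ j, P j := ⟨k, hPk⟩
  set j := Nat.find hex with hjdef
  have hj : P j := Nat.find_spec hex
  have hjk : j ≤ k := Nat.find_le hPk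
  have hmin : ∀ i, i < j → ¬ P i := fun i h => Nat.find_min hex h
  set u : ℕ := (L.take j).prod with hudef
  set v : ℕ := (L.drop j).prod with hvdef
  have huv : u * v = m := by rw [hudef, hvdef, List.prod_take_mul_prod_drop, hLprod]
  have hu0 : 0 < u := List.prod_pos fun x hx => (hLmem x (List.take_subset _ _ hx)).pos
  have hv0 : 0 < v := List.prod_pos fun x hx => (hLmem x (List.drop_subset _ _ hx)).pos
  -- Ω counts
  have hΩu : u.primeFactorsList.length = j := by
    have hperm := Nat.primeFactorsList_unique (n := u) rfl
      (fun p hp => (hLmem p (List.take_subset _ _ hp)))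
    rw [← hperm.length_eq, List.length_take, min_eq_left hjk]
  have hΩv : v.primeFactorsList.length = k - j := by
    have hperm := Nat.primeFactorsList_unique (n := v) rfl
      (fun p hp => (hLmem p (List.drop_subset _ _ hp)))
    rw [← hperm.length_eq, List.length_drop]
  -- v ≤ R^2
  have hjR : (m:ℝ) ≤ R ^ 2 * (u:ℝ) := hj
  have hv2 : (v:ℝ) ≤ R ^ 2 := by
    have hu0' : (0:ℝ) < (u:ℝ) := by exact_mod_cast hu0
    have : (u:ℝ) * (v:ℝ) ≤ R ^ 2 * (u:ℝ) := by
      rw [← Nat.cast_mul, huv]; exact hjR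
    nlinarith
  refine ⟨u, v, hu0, hv0, huv.symm, Or.inr ⟨?_, hv2, ?_⟩⟩
  all_goals rcases Nat.eq_zero_or_pos j with hj0 | hj1
  -- u ≤ R^2, j = 0
  · simp only [hudef, hj0, List.take_zero, List.prod_nil, Nat.cast_one]
    nlinarith
  -- u ≤ R^2, j ≥ 1
  · have hj1k : j - 1 < k := by omega
    have hdropsplit : L.drop (j-1) = L[j-1] :: L.drop j := by
      have h := List.drop_eq_getElem_cons (l := L) hj1k
      rwa [Nat.sub_add_cancel hj1] at h
    set c : ℕ := L[j-1] with hcdef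
    set A : ℕ := (L.take (j-1)).prod with hAdef
    have hA0 : 0 < A := List.prod_pos fun x hx => (hLmem x (List.take_subset _ _ hx)).pos
    have hAB : A * (c * v) = m := by
      rw [hvdef, hAdef, ← List.prod_cons, ← hdropsplit, List.prod_take_mul_prod_drop, hLprod]
    have hueq : u = A * c := by
      have h1 : u * v = (A * c) * v := by rw [huv, ← hAB]; ring
      exact Nat.eq_of_mul_eq_mul_right hv0 h1
    have hmA : R ^ 2 * (A:ℝ) < (m:ℝ) := by
      have hnot : ¬ ((m:ℝ) ≤ R ^ 2 * ((L.take (j-1)).prod : ℕ)) := hmin (j-1) (by omega)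
      exact lt_of_not_ge hnot
    have hAR : (A:ℝ) < R := by
      have hmn' : (m:ℝ) ≤ R ^ 3 := by rw [← hN]; exact_mod_cast hmn
      have h2 : R ^ 2 * (A:ℝ) < R ^ 2 * R := by nlinarith
      have hR2pos : (0:ℝ) < R ^ 2 := by positivity
      exact lt_of_mul_lt_mul_left h2 hR2pos.le
    have hcprime : c.Prime := hLmem c (List.getElem_mem hj1k)
    rcases Nat.eq_or_lt_of_le hj1 with hj1' | hj2
    -- j = 1
    · have hA1 : A = 1 := by
        rw [hAdef, ← hj1', Nat.sub_self, List.take_zero, List.prod_nil]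
      have : u = c := by rw [hueq, hA1, one_mul]
      rw [this]
      exact hbig c hcprime (hLprod ▸ List.dvd_prod (List.getElem_mem hj1k))
    -- j ≥ 2
    · have hcA : ∀ x ∈ L.take (j-1), c ≤ x := by
        have hsp := List.take_append_drop (j-1) L
        have hpw : List.Pairwise (· ≥ ·) (L.take (j-1) ++ L.drop (j-1)) := by
          rw [hsp]; exact hLsorted
        have := (List.pairwise_append.mp hpw).2.2
        intro x hx
        exact this x hx c (by rw [hdropsplit]; exact List.mem_cons_self)
      have hlenA : (L.take (j-1)).length = j - 1 := by
        rw [List.length_take]; omega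
      have hcpow : c ^ (j-1) ≤ A := by
        have h := List.pow_card_le_prod (L.take (j-1)) c hcA
        rwa [hlenA] at h
      have hcR : (c:ℝ) < R := by
        have h1 : c ≤ c ^ (j-1) := Nat.le_self_pow (by omega) c
        have : (c:ℝ) ≤ (A:ℝ) := by exact_mod_cast h1.trans hcpow
        linarith
      rw [hueq]
      push_cast
      nlinarith [hcprime.two_le, hA0]
  -- count, j = 0
  · rw [hΩu, hΩv, hj0]; omega
  -- count, j ≥ 1
  · rw [hΩu, hΩv]
    rcases Nat.eq_or_lt_of_le hj1 with hj1' | hj2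
    · omega
    -- j ≥ 2 : the key counting argument
    · have hj1k : j - 1 < k := by omega
      have hdropsplit : L.drop (j-1) = L[j-1] :: L.drop j := by
        have h := List.drop_eq_getElem_cons (l := L) hj1k
        rwa [Nat.sub_add_cancel hj1] at h
      set c : ℕ := L[j-1] with hcdef
      set A : ℕ := (L.take (j-1)).prod with hAdef
      set B : ℕ := (L.drop (j-1)).prod with hBdef
      have hA0 : 0 < A := List.prod_pos fun x hx => (hLmem x (List.take_subset _ _ hx)).pos
      have hAB : A * B = m := by
        rw [hAdef, hBdef, List.prod_take_mul_prod_drop, hLprod]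
      have hmA : R ^ 2 * (A:ℝ) < (m:ℝ) := by
        have hnot : ¬ ((m:ℝ) ≤ R ^ 2 * ((L.take (j-1)).prod : ℕ)) := hmin (j-1) (by omega)
        exact lt_of_not_ge hnot
      have hAR : (A:ℝ) < R := by
        have hmn' : (m:ℝ) ≤ R ^ 3 := by rw [← hN]; exact_mod_cast hmn
        have h2 : R ^ 2 * (A:ℝ) < R ^ 2 * R := by nlinarith
        have hR2pos : (0:ℝ) < R ^ 2 := by positivity
        exact lt_of_mul_lt_mul_left h2 hR2pos.le
      have hcprime : c.Prime := hLmem c (List.getElem_mem hj1k)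
      have hcA : ∀ x ∈ L.take (j-1), c ≤ x := by
        have hsp := List.take_append_drop (j-1) L
        have hpw : List.Pairwise (· ≥ ·) (L.take (j-1) ++ L.drop (j-1)) := by
          rw [hsp]; exact hLsorted
        have := (List.pairwise_append.mp hpw).2.2
        intro x hx
        exact this x hx c (by rw [hdropsplit]; exact List.mem_cons_self)
      have hlenA : (L.take (j-1)).length = j - 1 := by
        rw [List.length_take]; omega
      have hcpow : c ^ (j-1) ≤ A := by
        have h := List.pow_card_le_prod (L.take (j-1)) c hcA
        rwa [hlenA] at h
      have hcB : ∀ y ∈ L.drop (j-1), y ≤ c := by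
        have hsub : (L.drop (j-1)).Pairwise (· ≥ ·) :=
          hLsorted.sublist (List.drop_sublist _ _)
        intro y hy
        rw [hdropsplit] at hy hsub
        rcases List.mem_cons.mp hy with h | h
        · omega
        · exact List.rel_of_pairwise_cons hsub h
      have hlenB : (L.drop (j-1)).length = k - (j-1) := List.length_drop
      have hBpow : B ≤ c ^ (k - (j-1)) := by
        have h := List.prod_le_pow_card (L.drop (j-1)) c hcB
        rwa [hlenB] at h
      have hBR : R ^ 2 < (B:ℝ) := by
        have hA0' : (0:ℝ) < (A:ℝ) := by exact_mod_cast hA0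
        have hmAB : (m:ℝ) = (A:ℝ) * (B:ℝ) := by rw [← hAB]; push_cast; ring
        nlinarith [hmA]
      have hcR : (c:ℝ) ^ (j-1) < R := by
        have : (c:ℝ)^(j-1) ≤ (A:ℝ) := by exact_mod_cast hcpow
        linarith
      have hkey : (c:ℝ) ^ (2*(j-1)) < (c:ℝ) ^ (k - (j-1)) := by
        have hBc : (B:ℝ) ≤ (c:ℝ) ^ (k-(j-1)) := by exact_mod_cast hBpow
        have h0c : (0:ℝ) ≤ (c:ℝ)^(j-1) := by positivity
        calc (c:ℝ) ^ (2*(j-1)) = ((c:ℝ)^(j-1))^2 := by rw [← pow_mul, mul_comm]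
          _ < R ^ 2 := by nlinarith
          _ < (B:ℝ) := hBR
          _ ≤ _ := hBc
      have hc1 : (1:ℝ) < (c:ℝ) := by exact_mod_cast hcprime.one_lt
      have := (pow_lt_pow_iff_right₀ hc1).mp hkey
      omega
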